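/- For every i with 1 ≤ i ≤ p−1, the number of key positions holding a key not larger than the i·s-th smallest sample key is at least i·s·x; that is, |{(k, q) ∈ Fin p × Fin (s·x) : K k q ≤ t_{i·s}}| ≥ i·s·x. -/

import Mathlib

/-- Auxiliary: `a * c - 1 < b * c` style index bounds reduce to this. -/
private lemma idx_lt {a b : ℕ} (ha : 1 ≤ a) (hab : a ≤ b) : a - 1 < b := by omega

/-- In the regular oversampling setup, for every `i` with
`1 ≤ i ≤ p - 1`, at least `i * s * x` key positions hold a key not larger than
the `i·s`-th smallest sample key. -/
theorem stmt_0
    (p s x : ℕ) (hp : 0 < p) (hs : 0 < s) (hx : 0 < x)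
    (α : Type*) [LinearOrder α]
    (K : Fin p → Fin (s * x) → α)
    (hK : ∀ k : Fin p, Monotone (K k))
    (t : Fin (p * s) → α)
    (ht : Monotone t)
    (hsample :
      (↑(List.ofFn t) : Multiset α) =
        Multiset.map
          (fun kj : Fin p × Fin s =>
            K kj.1
              ⟨((kj.2 : ℕ) + 1) * x - 1,
                idx_lt (Nat.mul_pos (Nat.succ_pos _) hx)
                  (Nat.mul_le_mul kj.2.isLt (le_refl x))⟩)
          Finset.univ.val) :
    ∀ i : ℕ, ∀ (hi1 : 1 ≤ i) (hi2 : i ≤ p - 1),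
      i * s * x ≤
        (Finset.univ.filter
          (fun kq : Fin p × Fin (s * x) =>
            K kq.1 kq.2 ≤
              t ⟨i * s - 1,
                idx_lt (Nat.mul_pos hi1 hs)
                  (Nat.mul_le_mul (le_trans hi2 (Nat.sub_le p 1)) (le_refl s))⟩)).card := by
  intro i hi1 hi2
  have hip : i < p := by omega
  set τ : α := t ⟨i * s - 1,
      idx_lt (Nat.mul_pos hi1 hs)
        (Nat.mul_le_mul (le_trans hi2 (Nat.sub_le p 1)) (le_refl s))⟩ with hτ
  set f : Fin p × Fin s → α := fun kj =>
    K kj.1 ⟨((kj.2 : ℕ) + 1) * x - 1,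
      idx_lt (Nat.mul_pos (Nat.succ_pos _) hx)
        (Nat.mul_le_mul kj.2.isLt (le_refl x))⟩ with hf
  set S : Finset (Fin p × Fin s) := Finset.univ.filter (fun kj => f kj ≤ τ) with hS
  -- Step 1: the number of sample indices with value ≤ τ equals S.card
  have hcount : (Finset.univ.filter (fun m : Fin (p * s) => t m ≤ τ)).card = S.card := by
    have h := congrArg (Multiset.countP (fun a => a ≤ τ)) hsample
    simp only [List.ofFn_eq_map, ← Multiset.map_coe, Multiset.countP_map,
      Multiset.countP_eq_card_filter, Multiset.filter_map, Multiset.card_map, Function.comp] at h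
    rw [Finset.card_def, Finset.card_def, Finset.filter_val, Finset.filter_val]
    exact h
  -- Step 1b: at least i*s sample indices have value ≤ τ
  have h1 : i * s ≤ S.card := by
    rw [← hcount]
    have hle : i * s ≤ p * s := Nat.mul_le_mul (le_of_lt hip) le_rfl
    have := Finset.card_le_card_of_injOn
      (f := fun m : Fin (i * s) => (⟨(m : ℕ), lt_of_lt_of_le m.isLt hle⟩ : Fin (p * s)))
      (s := Finset.univ) (t := Finset.univ.filter (fun m : Fin (p * s) => t m ≤ τ))
      (by
        intro m _
        simp only [Finset.mem_coe, Finset.mem_filter, Finset.mem_univ, true_and]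
        rw [hτ]
        apply ht
        simp only [Fin.mk_le_mk]
        have := m.isLt
        omega)
      (by
        intro a _ b _ hab
        simpa [Fin.ext_iff] using hab)
    simpa using this
  -- Step 2: injection from S ×ˢ Fin x into the target set
  have h2 : S.card * x ≤ (Finset.univ.filter
      (fun kq : Fin p × Fin (s * x) => K kq.1 kq.2 ≤ τ)).card := by
    have hbound : ∀ (j : Fin s) (r : Fin x), (j : ℕ) * x + r < s * x := by
      intro j r
      calc (j : ℕ) * x + r < (j : ℕ) * x + x := by omega
        _ = ((j : ℕ) + 1) * x := by ring
        _ ≤ s * x := Nat.mul_le_mul_right x j.isLt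
    have := Finset.card_le_card_of_injOn
      (f := fun kjr : (Fin p × Fin s) × Fin x =>
        ((kjr.1.1, ⟨(kjr.1.2 : ℕ) * x + kjr.2, hbound kjr.1.2 kjr.2⟩) :
          Fin p × Fin (s * x)))
      (s := S ×ˢ Finset.univ)
      (t := Finset.univ.filter (fun kq : Fin p × Fin (s * x) => K kq.1 kq.2 ≤ τ))
      (by
        intro kjr hmem
        rcases kjr with ⟨⟨k, j⟩, r⟩
        simp only [Finset.mem_coe, Finset.mem_product, hS, Finset.mem_filter, Finset.mem_univ, true_and] at hmem
        simp only [Finset.mem_coe, Finset.mem_filter, Finset.mem_univ, true_and]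
        refine le_trans ?_ hmem.1
        apply hK
        simp only [Fin.mk_le_mk, hf]
        have hjx : ((j : ℕ) + 1) * x = (j : ℕ) * x + x := by ring
        have := r.isLt
        omega)
      (by
        intro a _ b _ hab
        rcases a with ⟨⟨k, j⟩, r⟩
        rcases b with ⟨⟨k', j'⟩, r'⟩
        simp only [Prod.mk.injEq, Fin.mk.injEq] at hab
        obtain ⟨hk, hq⟩ := hab
        have hj : (j : ℕ) = (j' : ℕ) := by
          have e1 : ((j : ℕ) * x + (r : ℕ)) / x = (j : ℕ) := by
            rw [Nat.mul_comm, Nat.mul_add_div hx, Nat.div_eq_of_lt r.isLt]; omega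
          have e2 : ((j' : ℕ) * x + (r' : ℕ)) / x = (j' : ℕ) := by
            rw [Nat.mul_comm, Nat.mul_add_div hx, Nat.div_eq_of_lt r'.isLt]; omega
          rw [← e1, ← e2, hq]
        have hr : (r : ℕ) = (r' : ℕ) := by
          rw [hj] at hq; omega
        simp [Prod.ext_iff, Fin.ext_iff, hk, hj, hr])
    simpa [Finset.card_product, mul_comm] using this
  calc i * s * x ≤ S.card * x := Nat.mul_le_mul_right x h1
    _ ≤ _ := h2
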